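/- arXiv:1104.0153 — 2 statements merged into one kernel-verified Lean document; each statement's English description precedes it below -/
import Mathlib

section
/- For real x ≠ y, ∫₀^∞ Ai(x+λ)Ai(y+λ) dλ = (Ai(x)Ai'(y) − Ai'(x)Ai(y))/(x−y), where Ai is the Airy function. -/
open MeasureTheory Filter Asymptotics Set

/-- The Christoffel–Darboux form of the Airy kernel.  Here `Ai` denotes the Airy
function, characterized by the differential equation `Ai'' t = t * Ai t` together
with superexponential decay of `Ai` and `Ai'` at `+∞`. -/
theorem airy_kernel_integral (Ai Ai' : ℝ → ℝ)
    (hderiv : ∀ t, HasDerivAt Ai (Ai' t) t)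
    (hderiv' : ∀ t, HasDerivAt Ai' (t * Ai t) t)
    (hdecay : ∀ c : ℝ, Filter.Tendsto (fun t => Real.exp (c * t) * Ai t) Filter.atTop (nhds 0))
    (hdecay' : ∀ c : ℝ, Filter.Tendsto (fun t => Real.exp (c * t) * Ai' t) Filter.atTop (nhds 0))
    (x y : ℝ) (hxy : x ≠ y) :
    ∫ l in Set.Ioi (0:ℝ), Ai (x + l) * Ai (y + l)
      = (Ai x * Ai' y - Ai' x * Ai y) / (x - y) := by
  have hyx : y - x ≠ 0 := sub_ne_zero.mpr (Ne.symm hxy)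
  set F : ℝ → ℝ := fun l => (Ai (x + l) * Ai' (y + l) - Ai' (x + l) * Ai (y + l)) / (y - x)
    with hF
  have hshift : ∀ c : ℝ, Tendsto (fun l : ℝ => c + l) atTop atTop :=
    fun c => tendsto_atTop_add_const_left atTop c tendsto_id
  -- derivatives of shifted functions
  have hdx : ∀ c l : ℝ, HasDerivAt (fun l => Ai (c + l)) (Ai' (c + l)) l := by
    intro c l
    simpa [Function.comp_def] using (hderiv (c + l)).comp l ((hasDerivAt_id l).const_add c)
  have hdx' : ∀ c l : ℝ, HasDerivAt (fun l => Ai' (c + l)) ((c + l) * Ai (c + l)) l := by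
    intro c l
    simpa [Function.comp_def] using (hderiv' (c + l)).comp l ((hasDerivAt_id l).const_add c)
  have hdF : ∀ l, HasDerivAt F (Ai (x + l) * Ai (y + l)) l := by
    intro l
    have h := (((hdx x l).mul (hdx' y l)).sub ((hdx' x l).mul (hdx y l))).div_const (y - x)
    refine h.congr_deriv ?_
    rw [div_eq_iff hyx]
    ring
  -- basic decay statements
  have hAi0 : ∀ c : ℝ, Tendsto (fun l => Ai (c + l)) atTop (nhds 0) := by
    intro c
    have := (hdecay 0).comp (hshift c)
    simpa [Function.comp_def] using this
  have hAi0' : ∀ c : ℝ, Tendsto (fun l => Ai' (c + l)) atTop (nhds 0) := by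
    intro c
    have := (hdecay' 0).comp (hshift c)
    simpa [Function.comp_def] using this
  have hex : Tendsto (fun l => Real.exp l * Ai (x + l)) atTop (nhds 0) := by
    have h := ((hdecay 1).comp (hshift x)).const_mul (Real.exp (-x))
    have heq : (fun l => Real.exp (-x) * ((fun t => Real.exp (1 * t) * Ai t) (x + l)))
        = fun l => Real.exp l * Ai (x + l) := by
      funext l
      show Real.exp (-x) * (Real.exp (1 * (x + l)) * Ai (x + l)) = _
      rw [one_mul, Real.exp_add, Real.exp_neg]
      field_simp
    rw [Function.comp_def, heq] at h
    simpa using h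
  -- the integrand tends to 0 even after multiplying by exp l
  have hg0 : Tendsto (fun l => Real.exp l * (Ai (x + l) * Ai (y + l))) atTop (nhds 0) := by
    have := hex.mul (hAi0 y)
    simpa [mul_assoc] using this
  have hO : (fun l => Ai (x + l) * Ai (y + l)) =O[atTop] fun l => Real.exp (-1 * l) := by
    have h1 : (fun l => Real.exp l * (Ai (x + l) * Ai (y + l))) =O[atTop]
        (fun _ : ℝ => (1 : ℝ)) := hg0.isBigO_one ℝ
    have h2 := (isBigO_refl (fun l : ℝ => Real.exp (-l)) atTop).mul h1
    refine h2.congr (fun l => ?_) (fun l => ?_)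
    · rw [← mul_assoc, ← Real.exp_add, neg_add_cancel, Real.exp_zero, one_mul]
    · rw [mul_one, neg_one_mul]
  have hAicont : Continuous Ai := continuous_iff_continuousAt.mpr fun t => (hderiv t).continuousAt
  have hcont : ContinuousOn (fun l => Ai (x + l) * Ai (y + l)) (Ici 0) :=
    ((hAicont.comp (continuous_const.add continuous_id)).mul
      (hAicont.comp (continuous_const.add continuous_id))).continuousOn
  have hint : IntegrableOn (fun l => Ai (x + l) * Ai (y + l)) (Ioi 0) :=
    integrable_of_isBigO_exp_neg one_pos hcont hO
  have hFtop : Tendsto F atTop (nhds 0) := by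
    have := (((hAi0 x).mul (hAi0' y)).sub ((hAi0' x).mul (hAi0 y))).div_const (y - x)
    simpa [hF] using this
  have key := integral_Ioi_of_hasDerivAt_of_tendsto' (a := 0) (fun l _ => hdF l) hint hFtop
  rw [key]
  simp only [hF, add_zero]
  rw [zero_sub, ← div_neg, neg_sub]
end

section
/- For the Airy kernel K_Airy(x,x) = ∫₀^∞ Ai(x+λ)² dλ, one has the closed form ∫_s^∞ K_Airy(x,x) dx = (1/3)(2s²Ai(s)² − 2s·Ai'(s)² − Ai(s)Ai'(s)) for all real s. -/
open Real Filter MeasureTheory Set Topology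

/-- Generic decay lemma: products of two superexponentially decaying functions
times a power and an exponential tend to zero. -/
lemma airy_aux_tendsto {f g : ℝ → ℝ}
    (hf : ∀ c : ℝ, Tendsto (fun t => Real.exp (c * t) * f t) atTop (𝓝 0))
    (hg : ∀ c : ℝ, Tendsto (fun t => Real.exp (c * t) * g t) atTop (𝓝 0))
    (n : ℕ) (c : ℝ) :
    Tendsto (fun t => t ^ n * Real.exp (c * t) * (f t * g t)) atTop (𝓝 0) := by
  have key : (fun t => t ^ n * Real.exp (c * t) * (f t * g t))
      = fun t => (t ^ n * Real.exp (-t)) *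
        ((Real.exp ((c + 1) / 2 * t) * f t) * (Real.exp ((c + 1) / 2 * t) * g t)) := by
    funext t
    have h1 : Real.exp ((c + 1) / 2 * t) * Real.exp ((c + 1) / 2 * t)
        = Real.exp ((c + 1) * t) := by
      rw [← Real.exp_add]; ring_nf
    have h2 : Real.exp (-t) * Real.exp ((c + 1) * t) = Real.exp (c * t) := by
      rw [← Real.exp_add]; ring_nf
    calc t ^ n * Real.exp (c * t) * (f t * g t)
        = t ^ n * (Real.exp (-t) * Real.exp ((c + 1) * t)) * (f t * g t) := by rw [h2]
      _ = (t ^ n * Real.exp (-t)) *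
          ((Real.exp ((c + 1) / 2 * t) * f t) * (Real.exp ((c + 1) / 2 * t) * g t)) := by
          rw [← h1]; ring
  rw [key]
  have h0 : Tendsto (fun t : ℝ => t ^ n * Real.exp (-t)) atTop (𝓝 0) :=
    tendsto_pow_mul_exp_neg_atTop_nhds_zero n
  simpa using h0.mul ((hf ((c + 1) / 2)).mul (hg ((c + 1) / 2)))

/-- Integrability from exponential decay. -/
lemma airy_aux_integrable {g : ℝ → ℝ} (hg : Continuous g)
    (h : Tendsto (fun t => Real.exp t * g t) atTop (𝓝 0)) (a : ℝ) :
    IntegrableOn g (Set.Ioi a) := by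
  apply integrable_of_isBigO_exp_neg (b := 1) one_pos hg.continuousOn
  have hO : (fun t => Real.exp t * g t) =O[atTop] (fun _ : ℝ => (1 : ℝ)) :=
    h.isBigO_one ℝ
  have h2 := hO.mul (Asymptotics.isBigO_refl (fun t : ℝ => Real.exp (-t)) atTop)
  have heq : (fun t => Real.exp t * g t * Real.exp (-t)) = g := by
    funext t
    rw [mul_comm (Real.exp t) (g t), mul_assoc, ← Real.exp_add]
    simp
  rw [heq] at h2
  simpa using h2

/-- Closed form for the trace of the Airy kernel operator on `L²(s,∞)`:
`∫_s^∞ K_Airy(x,x) dx = (1/3)(2 s² Ai(s)² − 2 s Ai'(s)² − Ai(s) Ai'(s))`,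
where `K_Airy(x,x) = ∫_0^∞ Ai(x+λ)² dλ`. -/
theorem airy_kernel_trace (Ai Ai' : ℝ → ℝ)
    (hderiv : ∀ t, HasDerivAt Ai (Ai' t) t)
    (hderiv' : ∀ t, HasDerivAt Ai' (t * Ai t) t)
    (hdecay : ∀ c : ℝ, Filter.Tendsto (fun t => Real.exp (c * t) * Ai t) Filter.atTop (nhds 0))
    (hdecay' : ∀ c : ℝ, Filter.Tendsto (fun t => Real.exp (c * t) * Ai' t) Filter.atTop (nhds 0))
    (s : ℝ) :
    ∫ x in Set.Ioi s, (∫ l in Set.Ioi (0:ℝ), Ai (x + l) ^ 2)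
      = (1 / 3) * (2 * s ^ 2 * Ai s ^ 2 - 2 * s * Ai' s ^ 2 - Ai s * Ai' s) := by
  have hAic : Continuous Ai := by
    have : Differentiable ℝ Ai := fun t => (hderiv t).differentiableAt
    exact this.continuous
  have hAic' : Continuous Ai' := by
    have : Differentiable ℝ Ai' := fun t => (hderiv' t).differentiableAt
    exact this.continuous
  -- limit of the antiderivative of the inner integrand
  have hΦ : Tendsto (fun u => u * Ai u ^ 2 - Ai' u ^ 2) atTop (𝓝 0) := by
    have u1 := airy_aux_tendsto hdecay hdecay 1 0
    have u2 := airy_aux_tendsto hdecay' hdecay' 0 0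
    have := u1.sub u2
    simp only [zero_mul, Real.exp_zero, pow_zero, pow_one, one_mul, mul_one, sub_zero] at this
    refine this.congr fun t => by ring
  -- the inner integrand decays exponentially (uniformly precomposed)
  have hsq : Tendsto (fun u => Real.exp u * (Ai u * Ai u)) atTop (𝓝 0) := by
    have := airy_aux_tendsto hdecay hdecay 0 1
    simpa using this
  -- inner integral computation
  have hinner : ∀ x : ℝ, (∫ l in Set.Ioi (0:ℝ), Ai (x + l) ^ 2)
      = Ai' x ^ 2 - x * Ai x ^ 2 := by
    intro x
    have hshift : Tendsto (fun l : ℝ => x + l) atTop atTop :=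
      tendsto_atTop_add_const_left atTop x tendsto_id
    have hd : ∀ l ∈ Set.Ici (0:ℝ),
        HasDerivAt (fun l => (x + l) * Ai (x + l) ^ 2 - Ai' (x + l) ^ 2)
          (Ai (x + l) ^ 2) l := by
      intro l _
      have h1 : HasDerivAt (fun l : ℝ => x + l) 1 l := (hasDerivAt_id l).const_add x
      have h2 : HasDerivAt (fun l : ℝ => Ai (x + l)) (Ai' (x + l) * 1) l :=
        (hderiv (x + l)).comp l h1
      have h3 : HasDerivAt (fun l : ℝ => Ai' (x + l)) ((x + l) * Ai (x + l) * 1) l :=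
        (hderiv' (x + l)).comp l h1
      have := (h1.mul (h2.pow 2)).sub (h3.pow 2)
      refine this.congr_deriv ?_
      norm_num
      ring
    have hint : IntegrableOn (fun l => Ai (x + l) ^ 2) (Set.Ioi (0:ℝ)) := by
      apply airy_aux_integrable
      · exact (hAic.comp (continuous_const.add continuous_id)).pow 2
      · have hcomp := (hsq.comp hshift).const_mul (Real.exp (-x))
        simp only [mul_zero] at hcomp
        refine hcomp.congr fun l => ?_
        simp only [Function.comp]
        rw [← mul_assoc, ← Real.exp_add, sq]
        ring_nf
    have htend : Tendsto (fun l => (x + l) * Ai (x + l) ^ 2 - Ai' (x + l) ^ 2)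
        atTop (𝓝 0) := hΦ.comp hshift
    have := integral_Ioi_of_hasDerivAt_of_tendsto' hd hint htend
    rw [this]
    simp
  simp only [hinner]
  -- outer antiderivative
  have hdH : ∀ x ∈ Set.Ici s,
      HasDerivAt (fun x => -((1/3) * (2 * x ^ 2 * Ai x ^ 2 - 2 * x * Ai' x ^ 2 - Ai x * Ai' x)))
        (Ai' x ^ 2 - x * Ai x ^ 2) x := by
    intro x _
    have h1 : HasDerivAt (fun x : ℝ => 2 * x ^ 2) (2 * (2 * x)) x := by
      simpa using (hasDerivAt_pow 2 x).const_mul 2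
    have h2 : HasDerivAt (fun x : ℝ => 2 * x) 2 x := by
      simpa using (hasDerivAt_id x).const_mul 2
    have hA2 := (hderiv x).pow 2
    have hA'2 := (hderiv' x).pow 2
    have hAA' := (hderiv x).mul (hderiv' x)
    have := ((((h1.mul hA2).sub (h2.mul hA'2)).sub hAA').const_mul ((1:ℝ)/3)).neg
    refine this.congr_deriv ?_
    norm_num
    ring
  have hintG : IntegrableOn (fun x => Ai' x ^ 2 - x * Ai x ^ 2) (Set.Ioi s) := by
    apply airy_aux_integrable
    · exact (hAic'.pow 2).sub (continuous_id.mul (hAic.pow 2))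
    · have t1 := airy_aux_tendsto hdecay' hdecay' 0 1
      have t2 := airy_aux_tendsto hdecay hdecay 1 1
      have := t1.sub t2
      simp only [sub_zero] at this
      refine this.congr fun t => ?_
      simp only [pow_zero, pow_one, one_mul]
      ring
  have htendH : Tendsto
      (fun x => -((1/3) * (2 * x ^ 2 * Ai x ^ 2 - 2 * x * Ai' x ^ 2 - Ai x * Ai' x)))
      atTop (𝓝 0) := by
    have u1 := airy_aux_tendsto hdecay hdecay 2 0
    have u2 := airy_aux_tendsto hdecay' hdecay' 1 0
    have u3 := airy_aux_tendsto hdecay hdecay' 0 0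
    have := (((u1.const_mul 2).sub (u2.const_mul 2)).sub u3).const_mul ((1:ℝ)/3) |>.neg
    simp only [zero_mul, Real.exp_zero, mul_one, one_mul, pow_zero, pow_one, sub_zero, mul_zero,
      neg_zero] at this
    refine this.congr fun t => by ring
  have := integral_Ioi_of_hasDerivAt_of_tendsto' hdH hintG htendH
  rw [this]
  ring
end
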